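/- Let k ≥ 1 and let Adj be a symmetric adjacency relation on the vertex set Fin k × Fin k (representing a graph G on a k×k grid, where (i,j) denotes the vertex in row i and column j). Then the following are equivalent: (1) there exists b : Fin k → Fin k such that for all i ≠ i' in Fin k, the vertices (i, b i) and (i', b i') are adjacent (i.e., G contains a k-clique with exactly one vertex from each row); (2) there exist functions x : Fin (k+1) → ℚ and y : Fin k → ℚ whose combined list of values x 0, …, x k, y 0, …, y (k-1) consists of 2k+1 pairwise distinct rationals, such that (a) x (j.castSucc) < x (j.succ) for every j : Fin k, (b) x 0 < y i and y i < x (Fin.last k) for every i : Fin k, and (c) for every two distinct pairs (a,b) and (c,d) in Fin k × Fin k that are NOT adjacent under Adj, it is not the case that both x (b.castSucc) < y a < x (b.succ) and x (d.castSucc) < y c < x (d.succ). -/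

import Mathlib

/-- Correctness of the reduction from `k × k`-Clique to 4-Permutation SAT:
the grid graph `Adj` on `Fin k × Fin k` has a clique with one vertex per row
iff the constructed formula admits a satisfying injective rational assignment. -/
theorem kClique_iff_permSAT (k : ℕ) (hk : 1 ≤ k)
    (Adj : (Fin k × Fin k) → (Fin k × Fin k) → Prop)
    (hsymm : ∀ u v, Adj u v → Adj v u) :
    (∃ b : Fin k → Fin k, ∀ i i' : Fin k, i ≠ i' → Adj (i, b i) (i', b i')) ↔
    (∃ (x : Fin (k + 1) → ℚ) (y : Fin k → ℚ),
      Function.Injective (Sum.elim x y) ∧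
      (∀ j : Fin k, x j.castSucc < x j.succ) ∧
      (∀ i : Fin k, x 0 < y i ∧ y i < x (Fin.last k)) ∧
      (∀ a b c d : Fin k, (a, b) ≠ (c, d) → ¬ Adj (a, b) (c, d) →
        ¬ ((x b.castSucc < y a ∧ y a < x b.succ) ∧
           (x d.castSucc < y c ∧ y c < x d.succ)))) := by
  constructor
  · rintro ⟨b, hb⟩
    set f : Fin k → ℚ := fun i => ((i : ℚ) + 1) / ((k : ℚ) + 1) with hf
    have hk1 : (0 : ℚ) < (k : ℚ) + 1 := by positivity
    have hf0 : ∀ i : Fin k, 0 < f i := by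
      intro i; apply div_pos _ hk1; positivity
    have hf1 : ∀ i : Fin k, f i < 1 := by
      intro i
      rw [div_lt_one hk1]
      have : (i : ℚ) < k := by exact_mod_cast i.isLt
      linarith
    refine ⟨fun j => ((j : ℕ) : ℚ), fun i => ((b i : ℕ) : ℚ) + f i, ?_, ?_, ?_, ?_⟩
    · -- injectivity
      have hxy : ∀ (j : Fin (k+1)) (i : Fin k), ((j : ℕ) : ℚ) ≠ ((b i : ℕ) : ℚ) + f i := by
        intro j i
        rcases le_or_gt (j : ℕ) (b i : ℕ) with h | h
        · have : ((j : ℕ) : ℚ) ≤ ((b i : ℕ) : ℚ) := by exact_mod_cast h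
          have := hf0 i; intro he; linarith
        · have : ((b i : ℕ) : ℚ) + 1 ≤ ((j : ℕ) : ℚ) := by exact_mod_cast h
          have := hf1 i; intro he; linarith
      intro u v huv
      rcases u with ju | iu <;> rcases v with jv | iv <;> simp only [Sum.elim_inl, Sum.elim_inr] at huv
      · have : (ju : ℕ) = (jv : ℕ) := by exact_mod_cast huv
        simp [Fin.ext_iff, this]
      · exact absurd huv (hxy ju iv)
      · exact absurd huv.symm (hxy jv iu)
      · -- y injective
        have hb' : (b iu : ℕ) = (b iv : ℕ) := by
          rcases lt_trichotomy (b iu : ℕ) (b iv : ℕ) with h | h | h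
          · have h1 : ((b iu : ℕ) : ℚ) + 1 ≤ ((b iv : ℕ) : ℚ) := by exact_mod_cast h
            have := hf0 iv; have := hf1 iu; exfalso; linarith
          · exact h
          · have h1 : ((b iv : ℕ) : ℚ) + 1 ≤ ((b iu : ℕ) : ℚ) := by exact_mod_cast h
            have := hf0 iu; have := hf1 iv; exfalso; linarith
        have : f iu = f iv := by
          rw [hb'] at huv; linarith
        have : ((iu : ℕ) : ℚ) = ((iv : ℕ) : ℚ) := by
          simp only [hf, div_left_inj' (ne_of_gt hk1), add_left_inj] at this; exact_mod_cast this
        have : (iu : ℕ) = (iv : ℕ) := by exact_mod_cast this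
        simp [Fin.ext_iff, this]
    · intro j
      simp only [Fin.coe_castSucc, Fin.val_succ]
      push_cast; linarith
    · intro i
      constructor
      · simp only [Fin.val_zero, Nat.cast_zero]
        have := hf0 i; positivity
      · simp only [Fin.val_last]
        have h1 : ((b i : ℕ) : ℚ) + 1 ≤ (k : ℚ) := by exact_mod_cast (b i).isLt
        have := hf1 i; linarith
    · rintro a c a' c' hne hadj ⟨⟨h1, h2⟩, ⟨h3, h4⟩⟩
      simp only [Fin.coe_castSucc, Fin.val_succ] at h1 h2 h3 h4
      push_cast at h1 h2 h3 h4
      -- c = b a and c' = b a'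
      have hc : (c : ℕ) = (b a : ℕ) := by
        rcases lt_trichotomy (c : ℕ) (b a : ℕ) with h | h | h
        · have : ((c : ℕ) : ℚ) + 1 ≤ ((b a : ℕ) : ℚ) := by exact_mod_cast h
          have := hf0 a; linarith
        · exact h
        · have : ((b a : ℕ) : ℚ) + 1 ≤ ((c : ℕ) : ℚ) := by exact_mod_cast h
          have := hf1 a; linarith
      have hc' : (c' : ℕ) = (b a' : ℕ) := by
        rcases lt_trichotomy (c' : ℕ) (b a' : ℕ) with h | h | h
        · have : ((c' : ℕ) : ℚ) + 1 ≤ ((b a' : ℕ) : ℚ) := by exact_mod_cast h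
          have := hf0 a'; linarith
        · exact h
        · have : ((b a' : ℕ) : ℚ) + 1 ≤ ((c' : ℕ) : ℚ) := by exact_mod_cast h
          have := hf1 a'; linarith
      have hc2 : c = b a := Fin.ext hc
      have hc'2 : c' = b a' := Fin.ext hc'
      subst hc2 hc'2
      rcases eq_or_ne a a' with rfl | hne'
      · exact hne rfl
      · exact hadj (hb a a' hne')
  · rintro ⟨x, y, hinj, hmono, hrange, hclause⟩
    have hx : StrictMono x := by
      rw [Fin.strictMono_iff_lt_succ]
      intro j
      exact hmono ⟨j, by omega⟩
    have key : ∀ i : Fin k, ∃ j : Fin k, x j.castSucc < y i ∧ y i < x j.succ := by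
      intro i
      set S : Finset (Fin (k+1)) := Finset.univ.filter (fun j => x j < y i) with hS
      have h0 : (0 : Fin (k+1)) ∈ S := by
        simp [hS, (hrange i).1]
      have hSne : S.Nonempty := ⟨0, h0⟩
      set m := S.max' hSne with hm
      have hmS : m ∈ S := S.max'_mem hSne
      have hxm : x m < y i := by simpa [hS] using hmS
      have hmne : m ≠ Fin.last k := by
        intro h
        rw [h] at hxm
        exact absurd hxm (not_lt.2 (le_of_lt (hrange i).2))
      obtain ⟨j, hj⟩ := Fin.exists_castSucc_eq.2 hmne
      refine ⟨j, by rw [hj]; exact hxm, ?_⟩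
      have hsuccS : j.succ ∉ S := by
        intro hmem
        have := S.le_max' _ hmem
        rw [← hm, ← hj] at this
        exact absurd (show j.castSucc < j.succ from Fin.castSucc_lt_succ) (not_lt.2 this)
      have hle : y i ≤ x j.succ := by
        by_contra h
        exact hsuccS (by simp [hS]; linarith [not_le.1 h])
      rcases lt_or_eq_of_le hle with h | h
      · exact h
      · exfalso
        have := hinj (a₁ := Sum.inr i) (a₂ := Sum.inl j.succ) (by simpa using h)
        simp at this
    choose b hb1 hb2 using key
    refine ⟨b, fun i i' hii' => ?_⟩
    by_contra hadj
    exact hclause i (b i) i' (b i') (by simp [hii']) hadj ⟨⟨hb1 i, hb2 i⟩, ⟨hb1 i', hb2 i'⟩⟩
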